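/- Let D ~ Binomial(n, p) with 0 < p < 1, and let δ ∈ (0, p) be such that nδ is an integer. Then Pr(D ≤ nδ) ≥ 2^{−n·D(δ‖p)} / √(2n), where D(δ‖p) is the binary KL divergence in base 2. -/

import Mathlib

/-- The binary Kullback–Leibler divergence `D(a‖p)` between Bernoulli distributions,
in base-2 logarithms. -/
noncomputable def klBin (a p : ℝ) : ℝ :=
  a * Real.logb 2 (a / p) + (1 - a) * Real.logb 2 ((1 - a) / (1 - p))

open Real Stirling Nat

-- lower bound on stirlingSeq
lemma sqrtpi_le_stirling (k : ℕ) (hk : 1 ≤ k) : Real.sqrt π ≤ stirlingSeq k := by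
  obtain ⟨j, rfl⟩ := Nat.exists_eq_add_of_le hk
  have ht : Filter.Tendsto (stirlingSeq ∘ Nat.succ) Filter.atTop (nhds (Real.sqrt π)) :=
    tendsto_stirlingSeq_sqrt_pi.comp (Filter.tendsto_add_atTop_nat 1)
  have := Stirling.stirlingSeq'_antitone.le_of_tendsto ht j
  simpa [Nat.succ_eq_add_one, Nat.add_comm] using this

lemma stirling_le_one (k : ℕ) (hk : 1 ≤ k) : stirlingSeq k ≤ stirlingSeq 1 := by
  obtain ⟨j, rfl⟩ := Nat.exists_eq_add_of_le hk
  have := Stirling.stirlingSeq'_antitone (Nat.zero_le j)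
  simpa [Nat.succ_eq_add_one, Nat.add_comm] using this

lemma stirling_le_two (k : ℕ) (hk : 2 ≤ k) : stirlingSeq k ≤ stirlingSeq 2 := by
  obtain ⟨j, rfl⟩ := Nat.exists_eq_add_of_le hk
  have := Stirling.stirlingSeq'_antitone (Nat.le_add_left 1 j)
  rw [Nat.add_comm 2 j]
  exact this

lemma stirling_two : stirlingSeq 2 = Real.exp 1 ^ 2 / 4 := by
  have h4 : Real.sqrt (2 * (2:ℕ)) = 2 := by
    rw [show (2 * (2:ℕ) : ℝ) = 2 ^ 2 by norm_num, Real.sqrt_sq (by norm_num)]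
  rw [Stirling.stirlingSeq, h4]
  rw [Nat.factorial_two]
  have he : Real.exp 1 ≠ 0 := (Real.exp_pos 1).ne'
  field_simp
  ring

lemma sqrtpi_ge : (1.772453:ℝ) ≤ Real.sqrt π := by
  have h := Real.pi_gt_d6
  rw [show (1.772453:ℝ) = Real.sqrt (1.772453^2) from (Real.sqrt_sq (by norm_num)).symm]
  apply Real.sqrt_le_sqrt; nlinarith

lemma stirling_pos (k : ℕ) (hk : 1 ≤ k) : 0 < stirlingSeq k :=
  (Stirling.stirlingSeq'_pos (k-1)).trans_eq (by congr 1; omega)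

lemma sqrt_mul_le_add {d m : ℝ} (hd : 0 ≤ d) (hm : 0 ≤ m) :
    Real.sqrt (d*m) ≤ (d+m)/2 := by
  rw [show (d+m)/2 = Real.sqrt (((d+m)/2)^2) from (Real.sqrt_sq (by positivity)).symm]
  apply Real.sqrt_le_sqrt; nlinarith [sq_nonneg (d-m)]

lemma sqrt_le_aux {m : ℝ} (hm : 2 ≤ m) : 3 * Real.sqrt m ≤ Real.sqrt 2 * (m+1) := by
  have h1 : Real.sqrt (2 * ((m+1)/3)^2) = Real.sqrt 2 * ((m+1)/3) := by
    rw [Real.sqrt_mul (by norm_num), Real.sqrt_sq (by linarith)]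
  have h2 : Real.sqrt m ≤ Real.sqrt (2 * ((m+1)/3)^2) := by
    apply Real.sqrt_le_sqrt; nlinarith [sq_nonneg (m-2), sq_nonneg (m-1)]
  rw [h1] at h2; linarith

lemma stirling_core1 (m : ℕ) (hm : 2 ≤ m) :
    stirlingSeq 1 * stirlingSeq m * Real.sqrt ((1:ℝ)*m) ≤ ((1:ℝ)+m) * stirlingSeq (1+m) := by
  have hm1 : (2:ℝ) ≤ m := by exact_mod_cast hm
  have he : Real.exp 1 ≤ 2.7182818286 := Real.exp_one_lt_d9.le
  have hepos : (0:ℝ) < Real.exp 1 := Real.exp_pos 1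
  have hE3 : Real.exp 1 ^ 3 ≤ 20.0856 :=
    le_trans (pow_le_pow_left₀ hepos.le he 3) (by norm_num)
  have hE3pos : (0:ℝ) < Real.exp 1 ^ 3 := pow_pos hepos 3
  have ht : Real.sqrt 2 * Real.sqrt 2 = 2 := Real.mul_self_sqrt (by norm_num)
  have htpos : (0:ℝ) < Real.sqrt 2 := Real.sqrt_pos.mpr (by norm_num)
  have hA : stirlingSeq m ≤ Real.exp 1 ^ 2 / 4 := (stirling_le_two m hm).trans_eq stirling_two
  have hApos : (0:ℝ) < stirlingSeq m := stirling_pos m (by omega)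
  have hB : (1.772453:ℝ) ≤ stirlingSeq (1+m) := sqrtpi_ge.trans (sqrtpi_le_stirling _ (by omega))
  have hs0 : (0:ℝ) ≤ Real.sqrt m := Real.sqrt_nonneg _
  have hs3 : 3 * Real.sqrt (m:ℝ) ≤ Real.sqrt 2 * (m+1) := sqrt_le_aux hm1
  rw [one_mul, stirlingSeq_one, div_mul_eq_mul_div, div_mul_eq_mul_div,
    div_le_iff₀ htpos]
  set E := Real.exp 1
  set s := Real.sqrt (m:ℝ)
  set t := Real.sqrt 2
  set A := stirlingSeq m
  set B := stirlingSeq (1+m)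
  have h1 : E * A * s ≤ (E^3/4) * s := by
    nlinarith [mul_le_mul_of_nonneg_left hA (mul_nonneg hepos.le hs0)]
  have h2 : (E^3/4) * s ≤ (E^3/12) * (t*(m+1)) := by
    nlinarith [mul_le_mul_of_nonneg_left hs3 (le_of_lt (by positivity : (0:ℝ) < E^3/12))]
  have h3 : (E^3/12) * (t*(m+1)) ≤ 1.772453 * (t*(m+1)) := by
    nlinarith [mul_le_mul_of_nonneg_right (show E^3/12 ≤ (1.772453:ℝ) by nlinarith)
      (show (0:ℝ) ≤ t*(m+1) by positivity)]
  have h4 : 1.772453 * (t*(m+1)) ≤ (1+(m:ℝ)) * B * t := by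
    nlinarith [mul_le_mul_of_nonneg_right hB (show (0:ℝ) ≤ t*(m+1) by positivity)]
  linarith

lemma stirling_core (d m : ℕ) (hd : 1 ≤ d) (hm : 1 ≤ m) :
    stirlingSeq d * stirlingSeq m * Real.sqrt ((d:ℝ)*m) ≤ ((d:ℝ)+m) * stirlingSeq (d+m) := by
  rcases Nat.lt_or_ge d 2 with hd2 | hd2
  · have hd1 : d = 1 := by omega
    subst hd1
    rcases Nat.lt_or_ge m 2 with hm2 | hm2
    · have hm1 : m = 1 := by omega
      subst hm1
      have h2 : Real.sqrt 2 * Real.sqrt 2 = 2 := Real.mul_self_sqrt (by norm_num)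
      have htpos : (0:ℝ) < Real.sqrt 2 := Real.sqrt_pos.mpr (by norm_num)
      have hepos : (0:ℝ) < Real.exp 1 := Real.exp_pos 1
      rw [stirlingSeq_one, show (1+1 : ℕ) = 2 from rfl, stirling_two]
      push_cast
      rw [show ((1:ℝ)*1) = 1 by ring, Real.sqrt_one, mul_one]
      rw [show Real.exp 1/Real.sqrt 2*(Real.exp 1/Real.sqrt 2)
            = Real.exp 1^2/(Real.sqrt 2*Real.sqrt 2) from by ring, h2]
      linarith
    · exact_mod_cast stirling_core1 m hm2
  · rcases Nat.lt_or_ge m 2 with hm2 | hm2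
    · have hm1 : m = 1 := by omega
      subst hm1
      have h := stirling_core1 d hd2
      rw [Nat.add_comm 1 d] at h
      push_cast
      push_cast at h
      rw [show stirlingSeq d * stirlingSeq 1 = stirlingSeq 1 * stirlingSeq d from mul_comm _ _,
        show ((d:ℝ)+1) = 1+(d:ℝ) from add_comm _ _,
        show ((d:ℝ)*1) = 1*(d:ℝ) by ring]
      exact h
    · have hdm1 : (2:ℝ) ≤ d := by exact_mod_cast hd2
      have hmm1 : (2:ℝ) ≤ m := by exact_mod_cast hm2
      have he : Real.exp 1 ≤ 2.7182818286 := Real.exp_one_lt_d9.le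
      have hepos : (0:ℝ) < Real.exp 1 := Real.exp_pos 1
      have hE4 : Real.exp 1 ^ 4 ≤ 54.5983 :=
        le_trans (pow_le_pow_left₀ hepos.le he 4) (by norm_num)
      have hAd : stirlingSeq d ≤ Real.exp 1 ^ 2 / 4 := (stirling_le_two d hd2).trans_eq stirling_two
      have hAm : stirlingSeq m ≤ Real.exp 1 ^ 2 / 4 := (stirling_le_two m hm2).trans_eq stirling_two
      have hdpos : (0:ℝ) < stirlingSeq d := stirling_pos d (by omega)
      have hmpos : (0:ℝ) < stirlingSeq m := stirling_pos m (by omega)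
      have hB : (1.772453:ℝ) ≤ stirlingSeq (d+m) := sqrtpi_ge.trans (sqrtpi_le_stirling _ (by omega))
      have hs : Real.sqrt ((d:ℝ)*m) ≤ ((d:ℝ)+m)/2 := sqrt_mul_le_add (by positivity) (by positivity)
      have hs0 : (0:ℝ) ≤ Real.sqrt ((d:ℝ)*m) := Real.sqrt_nonneg _
      have step1 : stirlingSeq d * stirlingSeq m ≤ ((Real.exp 1 ^ 2 / 4) * (Real.exp 1 ^ 2 / 4)) :=
        mul_le_mul hAd hAm hmpos.le (by positivity)
      have step2 : stirlingSeq d * stirlingSeq m * Real.sqrt ((d:ℝ)*m)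
          ≤ ((Real.exp 1 ^ 2 / 4) * (Real.exp 1 ^ 2 / 4)) * (((d:ℝ)+m)/2) :=
        mul_le_mul step1 hs hs0 (by positivity)
      have hc : ((Real.exp 1 ^ 2 / 4) * (Real.exp 1 ^ 2 / 4)) ≤ (1.772453:ℝ)*2 := by nlinarith
      have step3 : ((Real.exp 1 ^ 2 / 4) * (Real.exp 1 ^ 2 / 4)) * (((d:ℝ)+m)/2) ≤ 1.772453*((d:ℝ)+m) := by
        nlinarith [mul_le_mul_of_nonneg_right hc
          (show (0:ℝ) ≤ ((d:ℝ)+m)/2 by positivity)]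
      have step4 : 1.772453*((d:ℝ)+m) ≤ ((d:ℝ)+m) * stirlingSeq (d+m) := by
        nlinarith [mul_le_mul_of_nonneg_right hB (show (0:ℝ) ≤ (d:ℝ)+m by positivity)]
      linarith

lemma factorial_stirling (k : ℕ) (hk : 1 ≤ k) :
    (k ! : ℝ) = stirlingSeq k * (Real.sqrt (2*k) * ((k:ℝ) / Real.exp 1)^k) := by
  have hk' : (0:ℝ) < k := by exact_mod_cast hk
  have hpos : 0 < Real.sqrt (2*(k:ℝ)) * ((k:ℝ)/Real.exp 1)^k :=
    mul_pos (Real.sqrt_pos.mpr (by positivity)) (pow_pos (div_pos hk' (Real.exp_pos 1)) k)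
  rw [Stirling.stirlingSeq, div_mul_cancel₀ _ hpos.ne']

lemma choose_bound (d m : ℕ) (hd : 1 ≤ d) (hm : 1 ≤ m) :
    (((d+m:ℕ)):ℝ)^(d+m) ≤ (((d+m).choose d : ℕ) : ℝ) * (d:ℝ)^d * (m:ℝ)^m
      * Real.sqrt (2*((d+m:ℕ):ℝ)) := by
  have hE : (0:ℝ) < Real.exp 1 := Real.exp_pos 1
  have hd0 : (0:ℝ) < d := by exact_mod_cast hd
  have hm0 : (0:ℝ) < m := by exact_mod_cast hm
  have hn0 : (0:ℝ) < ((d+m:ℕ):ℝ) := by push_cast; linarith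
  have hfd := factorial_stirling d hd
  have hfm := factorial_stirling m hm
  have hfn := factorial_stirling (d+m) (by omega)
  have hsq : Real.sqrt (2*(d:ℝ)) * Real.sqrt (2*(m:ℝ)) = 2 * Real.sqrt ((d:ℝ)*m) := by
    rw [← Real.sqrt_mul (by positivity),
      show (2*(d:ℝ))*(2*(m:ℝ)) = 2^2 * ((d:ℝ)*m) by ring,
      Real.sqrt_mul (by norm_num), Real.sqrt_sq (by norm_num)]
  have hs3 : Real.sqrt (2*((d+m:ℕ):ℝ)) * Real.sqrt (2*((d+m:ℕ):ℝ)) = 2*((d+m:ℕ):ℝ) :=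
    Real.mul_self_sqrt (by positivity)
  have key := stirling_core d m hd hm
  have hF : (0:ℝ) ≤ 2 * ((d+m:ℕ):ℝ)^(d+m) * (d:ℝ)^d * (m:ℝ)^m / Real.exp 1 ^ (d+m) := by
    positivity
  have hA : ((d+m:ℕ):ℝ)^(d+m) * ((d ! : ℝ) * (m ! : ℝ))
      ≤ ((d+m)! : ℝ) * ((d:ℝ)^d * (m:ℝ)^m) * Real.sqrt (2*((d+m:ℕ):ℝ)) := by
    rw [hfd, hfm, hfn]
    have eq1 : ((d+m:ℕ):ℝ)^(d+m) *
        ((stirlingSeq d * (Real.sqrt (2*(d:ℝ)) * ((d:ℝ)/Real.exp 1)^d)) *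
         (stirlingSeq m * (Real.sqrt (2*(m:ℝ)) * ((m:ℝ)/Real.exp 1)^m)))
        = (stirlingSeq d * stirlingSeq m * Real.sqrt ((d:ℝ)*m)) *
          (2 * ((d+m:ℕ):ℝ)^(d+m) * (d:ℝ)^d * (m:ℝ)^m / Real.exp 1 ^ (d+m)) := by
      calc ((d+m:ℕ):ℝ)^(d+m) *
        ((stirlingSeq d * (Real.sqrt (2*(d:ℝ)) * ((d:ℝ)/Real.exp 1)^d)) *
         (stirlingSeq m * (Real.sqrt (2*(m:ℝ)) * ((m:ℝ)/Real.exp 1)^m)))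
          = (stirlingSeq d * stirlingSeq m * (Real.sqrt (2*(d:ℝ)) * Real.sqrt (2*(m:ℝ))))
            * (((d+m:ℕ):ℝ)^(d+m) * ((d:ℝ)/Real.exp 1)^d * ((m:ℝ)/Real.exp 1)^m) := by
            ring
        _ = _ := by
            rw [hsq]
            field_simp
            ring_nf
            have h1 : Real.exp 1 ^ d * (Real.exp 1)⁻¹ ^ d = 1 := by rw [← mul_pow, mul_inv_cancel₀ hE.ne', one_pow]
            have h2 : Real.exp 1 ^ m * (Real.exp 1)⁻¹ ^ m = 1 := by rw [← mul_pow, mul_inv_cancel₀ hE.ne', one_pow]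
            linear_combination (stirlingSeq d * stirlingSeq m * (d:ℝ)^d * (m:ℝ)^m) * (Real.exp 1 ^ m * (Real.exp 1)⁻¹ ^ m * h1 + h2)
    have eq2 : stirlingSeq (d+m) * (Real.sqrt (2*((d+m:ℕ):ℝ)) * (((d+m:ℕ):ℝ)/Real.exp 1)^(d+m))
        * ((d:ℝ)^d * (m:ℝ)^m) * Real.sqrt (2*((d+m:ℕ):ℝ))
        = (((d:ℝ)+m) * stirlingSeq (d+m)) *
          (2 * ((d+m:ℕ):ℝ)^(d+m) * (d:ℝ)^d * (m:ℝ)^m / Real.exp 1 ^ (d+m)) := by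
      calc stirlingSeq (d+m) * (Real.sqrt (2*((d+m:ℕ):ℝ)) * (((d+m:ℕ):ℝ)/Real.exp 1)^(d+m))
        * ((d:ℝ)^d * (m:ℝ)^m) * Real.sqrt (2*((d+m:ℕ):ℝ))
          = stirlingSeq (d+m) * (Real.sqrt (2*((d+m:ℕ):ℝ)) * Real.sqrt (2*((d+m:ℕ):ℝ)))
            * ((((d+m:ℕ):ℝ)/Real.exp 1)^(d+m) * ((d:ℝ)^d * (m:ℝ)^m)) := by ring
        _ = _ := by
            rw [hs3, div_pow]
            field_simp
            push_cast
            ring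
    rw [eq1, eq2]
    exact mul_le_mul_of_nonneg_right key hF
  have hch : (((d+m).choose d : ℕ) : ℝ) * ((d ! : ℝ) * (m ! : ℝ)) = ((d+m)! : ℝ) := by
    have h := Nat.choose_mul_factorial_mul_factorial (Nat.le_add_right d m)
    rw [Nat.add_sub_cancel_left] at h
    calc (((d+m).choose d : ℕ) : ℝ) * ((d ! : ℝ) * (m ! : ℝ))
        = (((d+m).choose d * d ! * m ! : ℕ) : ℝ) := by push_cast; ring
      _ = _ := by rw [h]
  have hcc : (((d+m).choose d : ℕ) : ℝ) = ((d+m)! : ℝ) / ((d ! : ℝ) * (m ! : ℝ)) := by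
    rw [eq_div_iff (by positivity)]
    exact hch
  rw [hcc, div_mul_eq_mul_div, div_mul_eq_mul_div, div_mul_eq_mul_div,
    le_div_iff₀ (by positivity)]
  refine le_trans (le_of_eq (by ring)) (hA.trans (le_of_eq (by ring)))

/-- lower bound on the lower tail of a Binomial(n, p): for `0 < δ < p` with
`nδ` an integer, `Pr(D ≤ nδ) ≥ 2^{-n D(δ‖p)} / √(2n)`. -/
theorem binomial_lower_tail_lower_bound (n : ℕ) (p δ : ℝ)
    (hp0 : 0 < p) (hp1 : p < 1) (hδ0 : 0 < δ) (hδp : δ < p)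
    (hint : ∃ d : ℕ, (n : ℝ) * δ = d) :
    (2 : ℝ) ^ (-(n : ℝ) * klBin δ p) / Real.sqrt (2 * n)
      ≤ ∑ k ∈ Finset.range (n + 1),
          (if (k : ℝ) ≤ n * δ then (n.choose k : ℝ) * p ^ k * (1 - p) ^ (n - k) else 0) := by
  obtain ⟨d, hd⟩ := hint
  rcases Nat.eq_zero_or_pos n with hn | hn
  · subst hn
    simp [Real.sqrt_zero]
  have hδ1 : δ < 1 := hδp.trans hp1
  have hp1' : (0:ℝ) ≤ 1 - p := by linarith
  have hn0 : (0:ℝ) < n := by exact_mod_cast hn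
  have hd0 : 1 ≤ d := by
    rcases Nat.eq_zero_or_pos d with h | h
    · exfalso; rw [h] at hd; push_cast at hd; nlinarith
    · exact h
  have hdn : d < n := by
    by_contra h
    have h' : (n:ℝ) ≤ d := by exact_mod_cast not_lt.mp h
    nlinarith
  set m := n - d with hm
  have hnm : d + m = n := by omega
  have hm1 : 1 ≤ m := by omega
  have hmr : (m:ℝ) = (n:ℝ) - (d:ℝ) := by rw [hm, Nat.cast_sub hdn.le]
  have hδeq : δ = d / n := by rw [eq_div_iff hn0.ne']; linarith [hd]
  have h1δ : 1 - δ = m / n := by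
    rw [eq_div_iff hn0.ne', hmr]; linear_combination -hd
  have hterm : ∀ k ∈ Finset.range (n+1),
      0 ≤ (if (k:ℝ) ≤ n*δ then (n.choose k : ℝ) * p^k * (1-p)^(n-k) else 0) := by
    intro k _
    split
    · exact mul_nonneg (mul_nonneg (by positivity) (by positivity)) (pow_nonneg hp1' _)
    · exact le_refl 0
  have hdmem : d ∈ Finset.range (n+1) := by simp; omega
  have hsum := Finset.single_le_sum hterm hdmem
  rw [if_pos (le_of_eq hd.symm)] at hsum
  refine le_trans ?_ hsum
  have hm' : (n:ℝ)*(1-δ) = m := by rw [hmr]; linear_combination -hd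
  have hexp : -(n:ℝ) * klBin δ p
      = (d:ℝ) * Real.logb 2 (p/δ) + (m:ℝ) * Real.logb 2 ((1-p)/(1-δ)) := by
    simp only [klBin]
    have e1 : Real.logb 2 (δ/p) = -Real.logb 2 (p/δ) := by rw [← Real.logb_inv, inv_div]
    have e2 : Real.logb 2 ((1-δ)/(1-p)) = -Real.logb 2 ((1-p)/(1-δ)) := by
      rw [← Real.logb_inv, inv_div]
    rw [e1, e2]
    linear_combination Real.logb 2 (p/δ) * hd + Real.logb 2 ((1-p)/(1-δ)) * hm'
  rw [hexp, Real.rpow_add (by norm_num : (0:ℝ) < 2)]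
  have hr1 : (2:ℝ) ^ ((d:ℝ) * Real.logb 2 (p/δ)) = (p/δ)^d := by
    rw [mul_comm, Real.rpow_mul (by norm_num : (0:ℝ) ≤ 2),
      Real.rpow_logb (by norm_num) (by norm_num) (div_pos hp0 hδ0), Real.rpow_natCast]
  have hr2 : (2:ℝ) ^ ((m:ℝ) * Real.logb 2 ((1-p)/(1-δ))) = ((1-p)/(1-δ))^m := by
    rw [mul_comm, Real.rpow_mul (by norm_num : (0:ℝ) ≤ 2),
      Real.rpow_logb (by norm_num) (by norm_num) (div_pos (by linarith) (by linarith)),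
      Real.rpow_natCast]
  rw [hr1, hr2]
  have key := choose_bound d m hd0 hm1
  rw [hnm] at key
  have hs2n : (0:ℝ) < Real.sqrt (2*(n:ℝ)) := Real.sqrt_pos.mpr (by positivity)
  rw [div_le_iff₀ hs2n]
  have hd0' : (0:ℝ) < d := by exact_mod_cast hd0
  have hm0' : (0:ℝ) < m := by exact_mod_cast hm1
  have hLHS : (p/δ)^d * ((1-p)/(1-δ))^m
      = (p^d*(1-p)^m) * ((n:ℝ)^n/((d:ℝ)^d*(m:ℝ)^m)) := by
    rw [h1δ, hδeq, div_div_eq_mul_div, div_div_eq_mul_div, div_pow, div_pow,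
      mul_pow, mul_pow, ← hnm]
    push_cast
    rw [pow_add]
    field_simp
  have key2 : (n:ℝ)^n/((d:ℝ)^d*(m:ℝ)^m) ≤ (n.choose d : ℝ)*Real.sqrt (2*(n:ℝ)) := by
    rw [div_le_iff₀ (by positivity)]
    calc (n:ℝ)^n ≤ (n.choose d : ℝ)*(d:ℝ)^d*(m:ℝ)^m*Real.sqrt (2*(n:ℝ)) := key
      _ = (n.choose d : ℝ)*Real.sqrt (2*(n:ℝ))*((d:ℝ)^d*(m:ℝ)^m) := by ring
  rw [hLHS]
  have hnd : n - d = m := rfl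
  rw [hnd]
  calc (p^d*(1-p)^m) * ((n:ℝ)^n/((d:ℝ)^d*(m:ℝ)^m))
      ≤ (p^d*(1-p)^m) * ((n.choose d : ℝ)*Real.sqrt (2*(n:ℝ))) :=
        mul_le_mul_of_nonneg_left key2
          (mul_nonneg (pow_nonneg hp0.le _) (pow_nonneg hp1' _))
    _ = (n.choose d : ℝ) * p^d * (1-p)^m * Real.sqrt (2*(n:ℝ)) := by ring
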